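/- arXiv:1810.11591 — 3 statements merged into one kernel-verified Lean document; each statement's English description precedes it below -/
import Mathlib

section
/- Let α > 0, b > 0, let X₁ be Bernoulli(p) with 0 ≤ p ≤ 1 and X₂ uniform on (0,b) independent of X₁, set Z = αX₁ + X₂, and let F be the cumulative distribution function of X₂, i.e. F(x) = min(max(x/b, 0), 1). Then E[ F(Z) − F(Z−α) ] = (α/b)(1 − α/(2b)) if α ≤ b, and E[ F(Z) − F(Z−α) ] = 1/2 if α > b. -/
open MeasureTheory ProbabilityTheory Real Set intervalIntegral

section aux
variable {b α : ℝ}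

private lemma Lcont (c : ℝ) : Continuous (fun x : ℝ => min (max ((x + c) / b) 0) 1) :=
  ((((continuous_id.add continuous_const).div_const b).max continuous_const).min
      continuous_const)

private lemma Lbdd (u : ℝ) : |min (max u 0) 1| ≤ 1 := by
  rw [abs_le]
  exact ⟨le_trans (by norm_num) (le_min (le_max_right _ _) zero_le_one), min_le_right _ _⟩



private lemma L1 (hb : 0 < b) :
    ∫ x in (0:ℝ)..b, min (max (x / b) 0) 1 = b / 2 := by
  rw [intervalIntegral.integral_congr (g := fun x => x / b)
      (by
        intro x hx
        rw [uIcc_of_le hb.le] at hx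
        dsimp only
        rw [max_eq_left (div_nonneg hx.1 hb.le),
          min_eq_left ((div_le_one hb).2 hx.2)]),
    intervalIntegral.integral_div, integral_id]
  field_simp
  ring

private lemma L2 (hb : 0 < b) (hα : 0 < α) (hαb : α ≤ b) :
    ∫ x in (0:ℝ)..b, min (max ((x + α) / b) 0) 1 = (b * b - α * α) / (2 * b) + α := by
  have hba : 0 ≤ b - α := by linarith
  have hcont : IntervalIntegrable (fun x : ℝ => min (max ((x + α) / b) 0) 1) volume 0 (b - α) :=
    ((((continuous_id.add continuous_const).div_const b).max continuous_const).min
      continuous_const).intervalIntegrable _ _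
  have hcont2 : IntervalIntegrable (fun x : ℝ => min (max ((x + α) / b) 0) 1) volume (b - α) b :=
    ((((continuous_id.add continuous_const).div_const b).max continuous_const).min
      continuous_const).intervalIntegrable _ _
  rw [← intervalIntegral.integral_add_adjacent_intervals hcont hcont2]
  have h1 : ∫ x in (0:ℝ)..(b - α), min (max ((x + α) / b) 0) 1
      = (b * b - α * α) / (2 * b) := by
    rw [intervalIntegral.integral_congr (g := fun x => (x + α) / b)
        (by
          intro x hx
          rw [uIcc_of_le hba] at hx
          dsimp only
          rw [max_eq_left (div_nonneg (by linarith [hx.1]) hb.le),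
            min_eq_left ((div_le_one hb).2 (by linarith [hx.2]))])]
    have := intervalIntegral.integral_comp_add_right (a := (0:ℝ)) (b := b - α)
      (fun u : ℝ => u / b) α
    rw [this, intervalIntegral.integral_div, integral_id]
    field_simp
    ring
  have h2 : ∫ x in (b - α)..b, min (max ((x + α) / b) 0) 1 = α := by
    rw [intervalIntegral.integral_congr (g := fun _ => (1:ℝ))
        (by
          intro x hx
          rw [uIcc_of_le (by linarith : b - α ≤ b)] at hx
          dsimp only
          rw [min_eq_right]
          refine le_trans ?_ (le_max_left _ _)
          rw [le_div_iff₀ hb]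
          linarith [hx.1]),
      intervalIntegral.integral_const]
    simp
  rw [h1, h2]

private lemma L3 (hb : 0 < b) (hα : 0 < α) (hαb : α ≤ b) :
    ∫ x in (0:ℝ)..b, min (max ((x - α) / b) 0) 1 = (b - α) * (b - α) / (2 * b) := by
  have hcont : IntervalIntegrable (fun x : ℝ => min (max ((x - α) / b) 0) 1) volume 0 α :=
    ((((continuous_id.sub continuous_const).div_const b).max continuous_const).min
      continuous_const).intervalIntegrable _ _
  have hcont2 : IntervalIntegrable (fun x : ℝ => min (max ((x - α) / b) 0) 1) volume α b :=
    ((((continuous_id.sub continuous_const).div_const b).max continuous_const).min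
      continuous_const).intervalIntegrable _ _
  rw [← intervalIntegral.integral_add_adjacent_intervals hcont hcont2]
  have h1 : ∫ x in (0:ℝ)..α, min (max ((x - α) / b) 0) 1 = 0 := by
    rw [intervalIntegral.integral_congr (g := fun _ => (0:ℝ))
        (by
          intro x hx
          rw [uIcc_of_le hα.le] at hx
          dsimp only
          rw [max_eq_right (div_nonpos_of_nonpos_of_nonneg (by linarith [hx.2]) hb.le)]
          simp)]
    simp
  have h2 : ∫ x in α..b, min (max ((x - α) / b) 0) 1 = (b - α) * (b - α) / (2 * b) := by
    rw [intervalIntegral.integral_congr (g := fun x => (x - α) / b)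
        (by
          intro x hx
          rw [uIcc_of_le hαb] at hx
          dsimp only
          rw [max_eq_left (div_nonneg (by linarith [hx.1]) hb.le),
            min_eq_left ((div_le_one hb).2 (by linarith [hx.2]))])]
    have := intervalIntegral.integral_comp_sub_right (a := α) (b := b)
      (fun u : ℝ => u / b) α
    rw [this, intervalIntegral.integral_div, integral_id]
    field_simp
    ring
  rw [h1, h2]; ring

private lemma L4 (hb : 0 < b) (hbα : b < α) :
    ∫ x in (0:ℝ)..b, min (max ((x + α) / b) 0) 1 = b := by
  rw [intervalIntegral.integral_congr (g := fun _ => (1:ℝ))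
      (by
        intro x hx
        rw [uIcc_of_le hb.le] at hx
        dsimp only
        rw [min_eq_right]
        refine le_trans ?_ (le_max_left _ _)
        rw [le_div_iff₀ hb]
        linarith [hx.1]),
    intervalIntegral.integral_const]
  simp

private lemma L5 (hb : 0 < b) (hbα : b < α) :
    ∫ x in (0:ℝ)..b, min (max ((x - α) / b) 0) 1 = 0 := by
  rw [intervalIntegral.integral_congr (g := fun _ => (0:ℝ))
      (by
        intro x hx
        rw [uIcc_of_le hb.le] at hx
        dsimp only
        rw [max_eq_right (div_nonpos_of_nonpos_of_nonneg (by linarith [hx.2]) hb.le)]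
        simp)]
  simp


end aux

/-- Let `α > 0`, `b > 0`, `X₁ ~ Bernoulli(p)` with `0 ≤ p ≤ 1`, `X₂`
uniform on `(0,b)` independent of `X₁`, `Z = αX₁ + X₂`, and `F(x) = min(max(x/b,0),1)`
the CDF of `X₂`.  Then `E[F(Z) - F(Z-α)] = (α/b)(1 - α/(2b))` if `α ≤ b`, and
`E[F(Z) - F(Z-α)] = 1/2` if `α > b`. -/
theorem stmt11 {Ω : Type*} [MeasurableSpace Ω] (μ : Measure Ω) [IsProbabilityMeasure μ]
    (α b p : ℝ) (hα : 0 < α) (hb : 0 < b) (hp0 : 0 ≤ p) (hp1 : p ≤ 1)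
    (X₁ X₂ : Ω → ℝ) (hX₁ : Measurable X₁) (hX₂ : Measurable X₂)
    (hBer : μ.map X₁ = ENNReal.ofReal p • Measure.dirac (1 : ℝ)
      + ENNReal.ofReal (1 - p) • Measure.dirac (0 : ℝ))
    (hUnif : μ.map X₂ = ProbabilityTheory.cond volume (Set.Ioo 0 b))
    (hindep : IndepFun X₁ X₂ μ)
    (Z : Ω → ℝ) (hZ : Z = fun ω => α * X₁ ω + X₂ ω)
    (F : ℝ → ℝ) (hF : ∀ x, F x = min (max (x / b) 0) 1) :
    ∫ ω, (F (Z ω) - F (Z ω - α)) ∂μ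
      = if α ≤ b then (α / b) * (1 - α / (2 * b)) else 1 / 2 := by
  have hFe : F = fun x => min (max (x / b) 0) 1 := funext hF
  subst hFe hZ
  set h : ℝ × ℝ → ℝ := fun q =>
    min (max ((α * q.1 + q.2) / b) 0) 1 - min (max ((α * q.1 + q.2 - α) / b) 0) 1 with hh
  have hcont : Continuous h := by
    apply Continuous.sub
    · exact ((((continuous_const.mul continuous_fst).add continuous_snd).div_const b).max
        continuous_const).min continuous_const
    · exact (((((continuous_const.mul continuous_fst).add continuous_snd).sub
        continuous_const).div_const b).max continuous_const).min continuous_const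
  have hbdd : ∀ q, ‖h q‖ ≤ (2:ℝ) := by
    intro q
    calc ‖h q‖ ≤ |min (max ((α * q.1 + q.2) / b) 0) 1|
          + |min (max ((α * q.1 + q.2 - α) / b) 0) 1| := abs_sub _ _
    _ ≤ 2 := by linarith [Lbdd ((α * q.1 + q.2) / b), Lbdd ((α * q.1 + q.2 - α) / b)]
  have hmap := (indepFun_iff_map_prod_eq_prod_map_map hX₁.aemeasurable hX₂.aemeasurable).mp hindep
  haveI : IsProbabilityMeasure (μ.map X₂) := Measure.isProbabilityMeasure_map hX₂.aemeasurable
  set m : Measure ℝ := ENNReal.ofReal p • Measure.dirac 1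
    + ENNReal.ofReal (1 - p) • Measure.dirac 0 with hm
  haveI hmfin : IsFiniteMeasure m := by
    constructor
    rw [hm]
    simp only [Measure.coe_add, Measure.coe_smul, Pi.add_apply, Pi.smul_apply,
      Measure.dirac_apply_of_mem (mem_univ _), smul_eq_mul, mul_one]
    exact ENNReal.add_lt_top.2 ⟨ENNReal.ofReal_lt_top, ENNReal.ofReal_lt_top⟩
  have step1 : ∫ ω, ((fun x => min (max (x / b) 0) 1) (α * X₁ ω + X₂ ω)
        - (fun x => min (max (x / b) 0) 1) (α * X₁ ω + X₂ ω - α)) ∂μ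
      = ∫ q, h q ∂(m.prod (μ.map X₂)) := by
    rw [← hBer, ← hmap,
      integral_map (hX₁.prodMk hX₂).aemeasurable hcont.aestronglyMeasurable]
  rw [step1]
  have hint : Integrable h (m.prod (μ.map X₂)) :=
    (integrable_const (2:ℝ)).mono' hcont.aestronglyMeasurable (ae_of_all _ hbdd)
  rw [MeasureTheory.integral_prod _ hint]
  set φ : ℝ → ℝ := fun a => ∫ y, h (a, y) ∂(μ.map X₂) with hφ
  have hφm : StronglyMeasurable φ := hcont.stronglyMeasurable.integral_prod_right'
  have hφb : ∀ a, ‖φ a‖ ≤ 2 := by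
    intro a
    calc ‖φ a‖ ≤ 2 * ((μ.map X₂) univ).toReal :=
      norm_integral_le_of_norm_le_const (ae_of_all _ fun y => hbdd (a, y))
    _ = 2 := by simp
  have hI : ∀ a : ℝ, Integrable φ (Measure.dirac a) := fun a =>
    (integrable_const (2:ℝ)).mono' hφm.aestronglyMeasurable (ae_of_all _ hφb)
  rw [hm, integral_add_measure ((hI 1).smul_measure ENNReal.ofReal_ne_top)
      ((hI 0).smul_measure ENNReal.ofReal_ne_top),
    MeasureTheory.integral_smul_measure, MeasureTheory.integral_smul_measure,
    integral_dirac, integral_dirac,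
    ENNReal.toReal_ofReal hp0, ENNReal.toReal_ofReal (by linarith : (0:ℝ) ≤ 1 - p)]
  -- compute νintegral of x ↦ min (max ((x+c)/b) 0) 1 for any c
  have key : ∀ c : ℝ, ∫ y, min (max ((y + c) / b) 0) 1 ∂(μ.map X₂)
      = b⁻¹ * ∫ x in (0:ℝ)..b, min (max ((x + c) / b) 0) 1 := by
    intro c
    rw [hUnif, ProbabilityTheory.cond, MeasureTheory.integral_smul_measure,
      ← integral_Ioc_eq_integral_Ioo, ← intervalIntegral.integral_of_le hb.le]
    simp [Real.volume_Ioo, ENNReal.toReal_inv, ENNReal.toReal_ofReal hb.le]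
  have hsub : ∀ c d : ℝ, ∫ y, (min (max ((y + c) / b) 0) 1
        - min (max ((y + d) / b) 0) 1) ∂(μ.map X₂)
      = b⁻¹ * ((∫ x in (0:ℝ)..b, min (max ((x + c) / b) 0) 1)
        - ∫ x in (0:ℝ)..b, min (max ((x + d) / b) 0) 1) := by
    intro c d
    rw [MeasureTheory.integral_sub, key c, key d, mul_sub]
    · exact (integrable_const (2:ℝ)).mono' (Lcont c).aestronglyMeasurable
        (ae_of_all _ fun y => by have := Lbdd ((y + c) / b); simp only [norm_eq_abs]; linarith)
    · exact (integrable_const (2:ℝ)).mono' (Lcont d).aestronglyMeasurable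
        (ae_of_all _ fun y => by have := Lbdd ((y + d) / b); simp only [norm_eq_abs]; linarith)
  have hφ1 : φ 1 = if α ≤ b then (α / b) * (1 - α / (2 * b)) else 1 / 2 := by
    have e1 : ∀ y : ℝ, α * 1 + y = y + α := fun y => by ring
    have e2 : ∀ y : ℝ, α * 1 + y - α = y + 0 := fun y => by ring
    have e3 : ∀ y : ℝ, y + α - α = y + 0 := fun y => by ring
    rw [hφ]
    simp only [hh, e1, e2, e3]
    rw [hsub α 0]
    have h0 : ∀ x : ℝ, (x + 0) / b = x / b := fun x => by rw [add_zero]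
    simp only [h0]
    split_ifs with hab
    · rw [L2 hb hα hab, L1 hb]
      field_simp
      ring
    · rw [L4 hb (lt_of_not_ge hab), L1 hb]
      field_simp
      ring
  have hφ0 : φ 0 = if α ≤ b then (α / b) * (1 - α / (2 * b)) else 1 / 2 := by
    have e1 : ∀ y : ℝ, α * 0 + y = y + 0 := fun y => by ring
    have e2 : ∀ y : ℝ, α * 0 + y - α = y + (-α) := fun y => by ring
    have e3 : ∀ y : ℝ, y + 0 - α = y + (-α) := fun y => by ring
    rw [hφ]
    simp only [hh, e1, e2, e3]
    rw [hsub 0 (-α)]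
    have h0 : ∀ x : ℝ, (x + 0) / b = x / b := fun x => by rw [add_zero]
    have h1 : ∀ x : ℝ, (x + (-α)) / b = (x - α) / b := fun x => by ring_nf
    simp only [h0, h1]
    split_ifs with hab
    · rw [L3 hb hα hab, L1 hb]
      field_simp
      ring
    · rw [L5 hb (lt_of_not_ge hab), L1 hb]
      field_simp
      ring
  rw [hφ1, hφ0, smul_eq_mul, smul_eq_mul]
  ring
end

section
/- Let α > 0, b > 0, let X₁ be Bernoulli(p) with 0 ≤ p ≤ 1 and X₂ uniform on (0,b) independent of X₁, set Z = αX₁ + X₂, and let F be the cumulative distribution function of X₂, i.e. F(x) = min(max(x/b, 0), 1). Then E[ (F(Z) − F(Z−α))² ] = (α/b)² (1 − (2/3)(α/b)) if α ≤ b, and E[ (F(Z) − F(Z−α))² ] = 1/3 if α > b. -/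
open MeasureTheory ProbabilityTheory Real Set

/-- Auxiliary integral computation. -/
lemma stmt12_aux (α b : ℝ) (hα : 0 < α) (hb : 0 < b) :
    ∫ x in (0:ℝ)..b, (min x α / b) ^ 2
      = b * (if α ≤ b then (α / b) ^ 2 * (1 - (2 / 3) * (α / b)) else 1 / 3) := by
  have hb0 : b ≠ 0 := hb.ne'
  have hcont : Continuous fun x : ℝ => (min x α) ^ 2 :=
    (continuous_id.min continuous_const).pow 2
  have h1 : ∫ x in (0:ℝ)..b, (min x α) ^ 2
      = if α ≤ b then b * α ^ 2 - 2 / 3 * α ^ 3 else b ^ 3 / 3 := by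
    by_cases h : α ≤ b
    · rw [if_pos h,
        ← intervalIntegral.integral_add_adjacent_intervals (a := (0:ℝ)) (b := α) (c := b)
          (hcont.intervalIntegrable _ _) (hcont.intervalIntegrable _ _)]
      have e1 : ∫ x in (0:ℝ)..α, (min x α) ^ 2 = ∫ x in (0:ℝ)..α, x ^ 2 := by
        apply intervalIntegral.integral_congr
        intro x hx
        rw [uIcc_of_le hα.le] at hx
        simp [min_eq_left hx.2]
      have e2 : ∫ x in α..b, (min x α) ^ 2 = ∫ x in α..b, (α : ℝ) ^ 2 := by
        apply intervalIntegral.integral_congr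
        intro x hx
        rw [uIcc_of_le h] at hx
        simp [min_eq_right hx.1]
      rw [e1, e2, integral_pow, intervalIntegral.integral_const, smul_eq_mul]
      ring
    · rw [if_neg h]
      have e1 : ∫ x in (0:ℝ)..b, (min x α) ^ 2 = ∫ x in (0:ℝ)..b, x ^ 2 := by
        apply intervalIntegral.integral_congr
        intro x hx
        rw [uIcc_of_le hb.le] at hx
        simp [min_eq_left (hx.2.trans (le_of_not_ge h))]
      rw [e1, integral_pow]
      norm_num
  simp only [div_pow]
  rw [intervalIntegral.integral_div, h1]
  split_ifs with h
  · field_simp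
  · field_simp

/-- Let `α > 0`, `b > 0`, `X₁ ~ Bernoulli(p)` with `0 ≤ p ≤ 1`, `X₂`
uniform on `(0,b)` independent of `X₁`, `Z = αX₁ + X₂`, and `F(x) = min(max(x/b,0),1)`
the CDF of `X₂`.  Then `E[(F(Z) - F(Z-α))²] = (α/b)²(1 - (2/3)(α/b))` if `α ≤ b`, and
`E[(F(Z) - F(Z-α))²] = 1/3` if `α > b`. -/
theorem stmt12 {Ω : Type*} [MeasurableSpace Ω] (μ : Measure Ω) [IsProbabilityMeasure μ]
    (α b p : ℝ) (hα : 0 < α) (hb : 0 < b) (hp0 : 0 ≤ p) (hp1 : p ≤ 1)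
    (X₁ X₂ : Ω → ℝ) (hX₁ : Measurable X₁) (hX₂ : Measurable X₂)
    (hBer : μ.map X₁ = ENNReal.ofReal p • Measure.dirac (1 : ℝ)
      + ENNReal.ofReal (1 - p) • Measure.dirac (0 : ℝ))
    (hUnif : μ.map X₂ = ProbabilityTheory.cond volume (Set.Ioo 0 b))
    (hindep : IndepFun X₁ X₂ μ)
    (Z : Ω → ℝ) (hZ : Z = fun ω => α * X₁ ω + X₂ ω)
    (F : ℝ → ℝ) (hF : ∀ x, F x = min (max (x / b) 0) 1) :
    ∫ ω, (F (Z ω) - F (Z ω - α)) ^ 2 ∂μ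
      = if α ≤ b then (α / b) ^ 2 * (1 - (2 / 3) * (α / b)) else 1 / 3 := by
  have hb0 : b ≠ 0 := hb.ne'
  set ν : Measure ℝ := ProbabilityTheory.cond volume (Set.Ioo 0 b) with hν
  have hνdef : ν = (ENNReal.ofReal b)⁻¹ • volume.restrict (Set.Ioo 0 b) := by
    rw [hν, ProbabilityTheory.cond, Real.volume_Ioo]
    norm_num
  have hνprob : IsProbabilityMeasure ν := by
    apply ProbabilityTheory.cond_isProbabilityMeasure_of_finite
    · rw [Real.volume_Ioo]
      simp [hb, ENNReal.ofReal_eq_zero, not_le]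
    · rw [Real.volume_Ioo]
      exact ENNReal.ofReal_ne_top
  -- basic facts about F
  have hFeq : F = fun x => min (max (x / b) 0) 1 := funext hF
  have hFc : Continuous F := by rw [hFeq]; fun_prop
  have hF0 : ∀ x, 0 ≤ F x := fun x => by
    rw [hF]; exact le_min (le_max_right _ _) zero_le_one
  have hF1 : ∀ x, F x ≤ 1 := fun x => by rw [hF]; exact min_le_right _ _
  have hFval : ∀ x, 0 ≤ x → x ≤ b → F x = x / b := by
    intro x h0 h1
    rw [hF, max_eq_left (div_nonneg h0 hb.le), min_eq_left ((div_le_one hb).mpr h1)]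
  have hFneg : ∀ x, x ≤ 0 → F x = 0 := by
    intro x h0
    rw [hF, max_eq_right (div_nonpos_of_nonpos_of_nonneg h0 hb.le),
      min_eq_left zero_le_one]
  have hFbig : ∀ x, b ≤ x → F x = 1 := by
    intro x h0
    rw [hF, min_eq_right]
    exact le_max_of_le_left ((one_le_div hb).mpr h0)
  -- the function under the expectation
  set g : ℝ → ℝ := fun z => (F z - F (z - α)) ^ 2 with hg
  have hgc : Continuous g := ((hFc.sub (hFc.comp (continuous_id.sub continuous_const))).pow 2)
  have hgb : ∀ z, ‖g z‖ ≤ 1 := by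
    intro z
    have h1 := hF0 z; have h2 := hF1 z; have h3 := hF0 (z - α); have h4 := hF1 (z - α)
    rw [Real.norm_eq_abs, abs_pow, sq_abs]
    nlinarith [sq_nonneg (F z - F (z - α))]
  -- main value
  set I : ℝ := if α ≤ b then (α / b) ^ 2 * (1 - (2 / 3) * (α / b)) else 1 / 3 with hI
  -- the two conditional integrals
  have hI0 : ∫ y, g y ∂ν = I := by
    rw [hνdef, integral_smul_measure, ← integral_Ioc_eq_integral_Ioo,
      ← intervalIntegral.integral_of_le hb.le]
    have e0 : ∫ x in (0:ℝ)..b, g x = ∫ x in (0:ℝ)..b, (min x α / b) ^ 2 := by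
      apply intervalIntegral.integral_congr
      intro x hx
      rw [uIcc_of_le hb.le] at hx
      obtain ⟨h0, h1⟩ := hx
      rw [hg]
      simp only
      rw [hFval x h0 h1]
      rcases le_total x α with h | h
      · rw [hFneg (x - α) (by linarith), min_eq_left h]
        ring
      · rw [hFval (x - α) (by linarith) (by linarith), min_eq_right h]
        ring
    rw [e0, stmt12_aux α b hα hb, ENNReal.toReal_inv, ENNReal.toReal_ofReal hb.le,
      smul_eq_mul, ← hI, inv_mul_cancel_left₀ hb0]
  have hI1 : ∫ y, g (α + y) ∂ν = I := by
    rw [hνdef, integral_smul_measure, ← integral_Ioc_eq_integral_Ioo,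
      ← intervalIntegral.integral_of_le hb.le]
    have e0 : ∫ x in (0:ℝ)..b, g (α + x) = ∫ x in (0:ℝ)..b, (min (b - x) α / b) ^ 2 := by
      apply intervalIntegral.integral_congr
      intro x hx
      rw [uIcc_of_le hb.le] at hx
      obtain ⟨h0, h1⟩ := hx
      rw [hg]
      simp only [add_sub_cancel_left]
      rw [hFval x h0 h1]
      rcases le_total (α + x) b with h | h
      · rw [hFval (α + x) (by linarith) h, min_eq_right (by linarith)]
        ring
      · rw [hFbig (α + x) h, min_eq_left (by linarith)]
        field_simp
    have e1 : ∫ x in (0:ℝ)..b, (min (b - x) α / b) ^ 2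
        = ∫ x in (0:ℝ)..b, (min x α / b) ^ 2 := by
      have := intervalIntegral.integral_comp_sub_left
        (a := (0:ℝ)) (b := b) (fun y => (min y α / b) ^ 2) b
      simpa using this
    rw [e0, e1, stmt12_aux α b hα hb, ENNReal.toReal_inv, ENNReal.toReal_ofReal hb.le,
      smul_eq_mul, ← hI, inv_mul_cancel_left₀ hb0]
  -- reduce the expectation to the product measure
  have hpair : Measurable fun ω => (X₁ ω, X₂ ω) := hX₁.prodMk hX₂
  have hmap : μ.map (fun ω => (X₁ ω, X₂ ω)) = (μ.map X₁).prod (μ.map X₂) :=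
    (ProbabilityTheory.indepFun_iff_map_prod_eq_prod_map_map hX₁.aemeasurable
      hX₂.aemeasurable).mp hindep
  haveI : IsProbabilityMeasure (μ.map X₁) := Measure.isProbabilityMeasure_map hX₁.aemeasurable
  haveI : IsProbabilityMeasure (μ.map X₂) := Measure.isProbabilityMeasure_map hX₂.aemeasurable
  have hφc : Continuous fun q : ℝ × ℝ => g (α * q.1 + q.2) :=
    hgc.comp ((continuous_const.mul continuous_fst).add continuous_snd)
  have step1 : ∫ ω, (F (Z ω) - F (Z ω - α)) ^ 2 ∂μ
      = ∫ q : ℝ × ℝ, g (α * q.1 + q.2) ∂((μ.map X₁).prod (μ.map X₂)) := by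
    rw [← hmap, integral_map hpair.aemeasurable hφc.aestronglyMeasurable, hZ]
  rw [step1, hUnif]
  have hint : Integrable (fun q : ℝ × ℝ => g (α * q.1 + q.2)) ((μ.map X₁).prod ν) := by
    refine (integrable_const (1:ℝ)).mono' hφc.aestronglyMeasurable ?_
    exact ae_of_all _ fun q => hgb _
  rw [MeasureTheory.integral_prod _ hint, hBer]
  set h : ℝ → ℝ := fun x => ∫ y, g (α * x + y) ∂ν with hh
  have hhsm : StronglyMeasurable h := hφc.stronglyMeasurable.integral_prod_right'
  have hhb : ∀ x, ‖h x‖ ≤ 1 := by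
    intro x
    have := norm_integral_le_of_norm_le_const (μ := ν)
      (f := fun y => g (α * x + y)) (C := 1) (ae_of_all _ fun y => hgb _)
    simpa using this
  have hintd : ∀ a : ℝ, Integrable h (Measure.dirac a) := by
    intro a
    refine (integrable_const (1:ℝ)).mono' hhsm.aestronglyMeasurable ?_
    exact ae_of_all _ fun x => hhb x
  rw [integral_add_measure ((hintd 1).smul_measure ENNReal.ofReal_ne_top)
      ((hintd 0).smul_measure ENNReal.ofReal_ne_top),
    integral_smul_measure, integral_smul_measure, integral_dirac' _ _ hhsm,
    integral_dirac' _ _ hhsm, ENNReal.toReal_ofReal hp0,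
    ENNReal.toReal_ofReal (by linarith : (0:ℝ) ≤ 1 - p)]
  have h1v : h 1 = I := by rw [hh]; simpa [mul_one] using hI1
  have h0v : h 0 = I := by rw [hh]; simpa using hI0
  rw [h1v, h0v, smul_eq_mul, smul_eq_mul]
  ring
end

section
/- Let α > 0, b > 0, let X₁ be Bernoulli(p) with 0 ≤ p ≤ 1 and X₂ uniform on (0,b) independent of X₁, set Z = αX₁ + X₂, and let F be the cumulative distribution function of X₂, i.e. F(x) = min(max(x/b, 0), 1). Then Var( F(Z) − F(Z−α) ) = (α/b)³ (1/3 − α/(4b)) if α ≤ b, and Var( F(Z) − F(Z−α) ) = 1/12 if α > b. -/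
open MeasureTheory ProbabilityTheory Real Set

lemma stmt13_aux {Ω : Type*} [MeasurableSpace Ω] (μ : Measure Ω) [IsProbabilityMeasure μ]
    (b p : ℝ) (hb : 0 < b) (hp0 : 0 ≤ p) (hp1 : p ≤ 1)
    (X₁ X₂ : Ω → ℝ) (hX₁ : Measurable X₁) (hX₂ : Measurable X₂)
    (hBer : μ.map X₁ = ENNReal.ofReal p • Measure.dirac (1 : ℝ)
      + ENNReal.ofReal (1 - p) • Measure.dirac (0 : ℝ))
    (hUnif : μ.map X₂ = ProbabilityTheory.cond volume (Set.Ioo 0 b))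
    (hindep : IndepFun X₁ X₂ μ)
    (H : ℝ × ℝ → ℝ) (hH : Continuous H) (hbd : ∀ q, |H q| ≤ 1) :
    ∫ ω, H (X₁ ω, X₂ ω) ∂μ
      = p * (b⁻¹ * ∫ x in (0:ℝ)..b, H (1, x))
        + (1-p) * (b⁻¹ * ∫ x in (0:ℝ)..b, H (0, x)) := by
  haveI i1 : IsProbabilityMeasure (μ.map X₁) := Measure.isProbabilityMeasure_map hX₁.aemeasurable
  haveI i2 : IsProbabilityMeasure (μ.map X₂) := Measure.isProbabilityMeasure_map hX₂.aemeasurable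
  have hmap : μ.map (fun ω => (X₁ ω, X₂ ω)) = (μ.map X₁).prod (μ.map X₂) :=
    (indepFun_iff_map_prod_eq_prod_map_map hX₁.aemeasurable hX₂.aemeasurable).mp hindep
  have h1 : ∫ ω, H (X₁ ω, X₂ ω) ∂μ = ∫ q, H q ∂((μ.map X₁).prod (μ.map X₂)) := by
    rw [← hmap, integral_map (hX₁.prodMk hX₂).aemeasurable hH.aestronglyMeasurable]
  have hInt : Integrable H ((μ.map X₁).prod (μ.map X₂)) :=
    (integrable_const (1:ℝ)).mono' hH.aestronglyMeasurable
      (Filter.Eventually.of_forall fun q => by simpa using hbd q)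
  have hg : StronglyMeasurable (fun x => ∫ y, H (x, y) ∂(μ.map X₂)) :=
    hH.stronglyMeasurable.integral_prod_right'
  have hdint : ∀ x : ℝ, Integrable (fun x => ∫ y, H (x, y) ∂(μ.map X₂)) (Measure.dirac x) := by
    intro x
    refine ⟨hg.aestronglyMeasurable, ?_⟩
    simp [HasFiniteIntegral, lintegral_dirac]
  rw [h1, integral_prod _ hInt, hBer, integral_add_measure
      ((hdint 1).smul_measure ENNReal.ofReal_ne_top)
      ((hdint 0).smul_measure ENNReal.ofReal_ne_top),
    integral_smul_measure, integral_smul_measure, integral_dirac, integral_dirac,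
    ENNReal.toReal_ofReal hp0, ENNReal.toReal_ofReal (by linarith : (0:ℝ) ≤ 1 - p)]
  have hcond : ∀ c : ℝ, ∫ y, H (c, y) ∂(μ.map X₂) = b⁻¹ * ∫ x in (0:ℝ)..b, H (c, x) := by
    intro c
    rw [hUnif]
    unfold ProbabilityTheory.cond
    rw [integral_smul_measure, Real.volume_Ioo, ENNReal.toReal_inv,
      ENNReal.toReal_ofReal (by linarith : (0:ℝ) ≤ b - 0),
      ← integral_Ioc_eq_integral_Ioo, ← intervalIntegral.integral_of_le hb.le]
    simp
  rw [hcond 1, hcond 0]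
  simp [smul_eq_mul]

lemma stmt13_int (a b : ℝ) (h0 : 0 ≤ a) (hab : a ≤ b) :
    ∫ x in (0:ℝ)..b, min x a = a * b - a ^ 2 / 2 := by
  rw [← intervalIntegral.integral_add_adjacent_intervals (a := (0:ℝ)) (b := a) (c := b)
      ((by fun_prop : Continuous fun x : ℝ => min x a).intervalIntegrable _ _)
      ((by fun_prop : Continuous fun x : ℝ => min x a).intervalIntegrable _ _)]
  have e1 : ∫ x in (0:ℝ)..a, min x a = ∫ x in (0:ℝ)..a, x := by
    refine intervalIntegral.integral_congr fun x hx => ?_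
    rw [uIcc_of_le h0] at hx
    exact min_eq_left hx.2
  have e2 : ∫ x in a..b, min x a = ∫ x in a..b, (fun _ => a) x := by
    refine intervalIntegral.integral_congr fun x hx => ?_
    rw [uIcc_of_le hab] at hx
    exact min_eq_right hx.1
  rw [e1, e2, integral_id, intervalIntegral.integral_const]
  simp only [smul_eq_mul]
  ring

lemma stmt13_int_sq (a b : ℝ) (h0 : 0 ≤ a) (hab : a ≤ b) :
    ∫ x in (0:ℝ)..b, (min x a) ^ 2 = a ^ 2 * b - 2 * a ^ 3 / 3 := by
  rw [← intervalIntegral.integral_add_adjacent_intervals (a := (0:ℝ)) (b := a) (c := b)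
      ((by fun_prop : Continuous fun x : ℝ => (min x a) ^ 2).intervalIntegrable _ _)
      ((by fun_prop : Continuous fun x : ℝ => (min x a) ^ 2).intervalIntegrable _ _)]
  have e1 : ∫ x in (0:ℝ)..a, (min x a) ^ 2 = ∫ x in (0:ℝ)..a, x ^ 2 := by
    refine intervalIntegral.integral_congr fun x hx => ?_
    rw [uIcc_of_le h0] at hx
    rw [min_eq_left hx.2]
  have e2 : ∫ x in a..b, (min x a) ^ 2 = ∫ x in a..b, (fun _ => a ^ 2) x := by
    refine intervalIntegral.integral_congr fun x hx => ?_
    rw [uIcc_of_le hab] at hx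
    rw [min_eq_right hx.1]
  rw [e1, e2, integral_pow, intervalIntegral.integral_const]
  simp only [smul_eq_mul]
  ring

lemma stmt13_ptA (α b x : ℝ) (hα : 0 < α) (hb : 0 < b) (hx0 : 0 ≤ x) (hxb : x ≤ b) :
    min (max (x / b) 0) 1 - min (max ((x - α) / b) 0) 1 = min x (min α b) / b := by
  have h1 : max (x / b) 0 = x / b := max_eq_left (div_nonneg hx0 hb.le)
  have h2 : min (x / b) 1 = x / b := min_eq_left ((div_le_one hb).2 hxb)
  have h3 : min (max ((x - α) / b) 0) 1 = max ((x - α) / b) 0 :=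
    min_eq_left (max_le ((div_le_one hb).2 (by linarith)) zero_le_one)
  rw [h1, h2, h3]
  rcases le_total x α with h | h
  · have hd : (x - α) / b ≤ 0 := div_nonpos_iff.mpr (Or.inr ⟨by linarith, hb.le⟩)
    rw [max_eq_right hd, min_eq_left (le_min h hxb)]
    ring
  · have hab : α ≤ b := le_trans h hxb
    rw [max_eq_left (div_nonneg (by linarith) hb.le), min_eq_left hab,
      min_eq_right h, div_sub_div_same]
    congr 1
    ring

lemma stmt13_ptB (α b x : ℝ) (hα : 0 < α) (hb : 0 < b) (hx0 : 0 ≤ x) (hxb : x ≤ b) :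
    min (max ((α + x) / b) 0) 1 - min (max (x / b) 0) 1 = min (b - x) (min α b) / b := by
  have h1 : max ((α + x) / b) 0 = (α + x) / b := max_eq_left (div_nonneg (by linarith) hb.le)
  have h2 : max (x / b) 0 = x / b := max_eq_left (div_nonneg hx0 hb.le)
  have h3 : min (x / b) 1 = x / b := min_eq_left ((div_le_one hb).2 hxb)
  rw [h1, h2, h3]
  rcases le_total (α + x) b with h | h
  · have hab : α ≤ b := by linarith
    rw [min_eq_left ((div_le_one hb).2 h), min_eq_left hab,
      min_eq_right (by linarith : α ≤ b - x), div_sub_div_same, add_sub_cancel_right]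
  · rw [min_eq_right ((one_le_div hb).2 h),
      min_eq_left (le_min (by linarith) (by linarith))]
    field_simp

/-- Let `α > 0`, `b > 0`, `X₁ ~ Bernoulli(p)` with `0 ≤ p ≤ 1`, `X₂`
uniform on `(0,b)` independent of `X₁`, `Z = αX₁ + X₂`, and `F(x) = min(max(x/b,0),1)`
the CDF of `X₂`.  Then `Var(F(Z) - F(Z-α)) = (α/b)³(1/3 - α/(4b))` if `α ≤ b`, and
`Var(F(Z) - F(Z-α)) = 1/12` if `α > b`. -/
theorem stmt13 {Ω : Type*} [MeasurableSpace Ω] (μ : Measure Ω) [IsProbabilityMeasure μ]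
    (α b p : ℝ) (hα : 0 < α) (hb : 0 < b) (hp0 : 0 ≤ p) (hp1 : p ≤ 1)
    (X₁ X₂ : Ω → ℝ) (hX₁ : Measurable X₁) (hX₂ : Measurable X₂)
    (hBer : μ.map X₁ = ENNReal.ofReal p • Measure.dirac (1 : ℝ)
      + ENNReal.ofReal (1 - p) • Measure.dirac (0 : ℝ))
    (hUnif : μ.map X₂ = ProbabilityTheory.cond volume (Set.Ioo 0 b))
    (hindep : IndepFun X₁ X₂ μ)
    (Z : Ω → ℝ) (hZ : Z = fun ω => α * X₁ ω + X₂ ω)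
    (F : ℝ → ℝ) (hF : ∀ x, F x = min (max (x / b) 0) 1) :
    variance (fun ω => F (Z ω) - F (Z ω - α)) μ
      = if α ≤ b then (α / b) ^ 3 * (1 / 3 - α / (4 * b)) else 1 / 12 := by
  have ha0 : 0 ≤ min α b := le_min hα.le hb.le
  have hab' : min α b ≤ b := min_le_right _ _
  set a := min α b with haDef
  have hFc : Continuous F := by
    have : F = fun x => min (max (x / b) 0) 1 := funext hF
    rw [this]; fun_prop
  have hF0 : ∀ x, 0 ≤ F x := fun x => by rw [hF]; exact le_min (le_max_right _ _) zero_le_one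
  have hF1 : ∀ x, F x ≤ 1 := fun x => by rw [hF]; exact min_le_right _ _
  set H : ℝ × ℝ → ℝ := fun q => F (α * q.1 + q.2) - F (α * q.1 + q.2 - α) with hH
  have hHc : Continuous H := by fun_prop
  have hbd : ∀ q, |H q| ≤ 1 := by
    intro q
    have a1 := hF0 (α * q.1 + q.2); have a2 := hF1 (α * q.1 + q.2)
    have a3 := hF0 (α * q.1 + q.2 - α); have a4 := hF1 (α * q.1 + q.2 - α)
    rw [abs_le]
    constructor <;> simp only [hH] <;> linarith
  have hbd2 : ∀ q, |(H q) ^ 2| ≤ 1 := by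
    intro q
    rw [abs_pow]
    calc |H q| ^ 2 ≤ 1 ^ 2 := pow_le_pow_left₀ (abs_nonneg _) (hbd q) 2
      _ = 1 := one_pow 2
  have hZm : Measurable Z := by rw [hZ]; exact (measurable_const.mul hX₁).add hX₂
  have hYm : Measurable (fun ω => F (Z ω) - F (Z ω - α)) :=
    (hFc.measurable.comp hZm).sub (hFc.measurable.comp (hZm.sub measurable_const))
  have hmem : MemLp (fun ω => F (Z ω) - F (Z ω - α)) 2 μ := by
    refine MemLp.of_bound hYm.aestronglyMeasurable 1 (Filter.Eventually.of_forall fun ω => ?_)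
    rw [Real.norm_eq_abs]
    have := hbd (X₁ ω, X₂ ω)
    simpa [hH, hZ] using this
  have I1 := stmt13_aux μ b p hb hp0 hp1 X₁ X₂ hX₁ hX₂ hBer hUnif hindep H hHc hbd
  have I2 := stmt13_aux μ b p hb hp0 hp1 X₁ X₂ hX₁ hX₂ hBer hUnif hindep
    (fun q => (H q) ^ 2) (hHc.pow 2) hbd2
  have c1 : ∀ x ∈ Icc (0:ℝ) b, H (1, x) = min (b - x) a / b := by
    intro x hx
    simp only [hH]
    rw [mul_one, add_sub_cancel_left, hF, hF]
    exact stmt13_ptB α b x hα hb hx.1 hx.2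
  have c0 : ∀ x ∈ Icc (0:ℝ) b, H (0, x) = min x a / b := by
    intro x hx
    simp only [hH]
    rw [mul_zero, zero_add, hF, hF]
    exact stmt13_ptA α b x hα hb hx.1 hx.2
  have hcs : ∀ g : ℝ → ℝ, ∫ x in (0:ℝ)..b, g (b - x) = ∫ x in (0:ℝ)..b, g x := by
    intro g
    have := intervalIntegral.integral_comp_sub_left (a := (0:ℝ)) (b := b) g b
    simpa using this
  have j1 : ∫ x in (0:ℝ)..b, H (1, x) = (a * b - a ^ 2 / 2) / b := by
    rw [intervalIntegral.integral_congr (g := fun x => min (b - x) a / b)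
      (fun x hx => c1 x (by rwa [uIcc_of_le hb.le] at hx))]
    rw [hcs (fun t => min t a / b), intervalIntegral.integral_div, stmt13_int a b ha0 hab']
  have j0 : ∫ x in (0:ℝ)..b, H (0, x) = (a * b - a ^ 2 / 2) / b := by
    rw [intervalIntegral.integral_congr (g := fun x => min x a / b)
      (fun x hx => c0 x (by rwa [uIcc_of_le hb.le] at hx))]
    rw [intervalIntegral.integral_div, stmt13_int a b ha0 hab']
  have j1s : ∫ x in (0:ℝ)..b, (H (1, x)) ^ 2 = (a ^ 2 * b - 2 * a ^ 3 / 3) / b ^ 2 := by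
    rw [intervalIntegral.integral_congr (g := fun x => (min (b - x) a) ^ 2 / b ^ 2)
      (fun x hx => by rw [c1 x (by rwa [uIcc_of_le hb.le] at hx), div_pow])]
    rw [hcs (fun t => (min t a) ^ 2 / b ^ 2), intervalIntegral.integral_div,
      stmt13_int_sq a b ha0 hab']
  have j0s : ∫ x in (0:ℝ)..b, (H (0, x)) ^ 2 = (a ^ 2 * b - 2 * a ^ 3 / 3) / b ^ 2 := by
    rw [intervalIntegral.integral_congr (g := fun x => (min x a) ^ 2 / b ^ 2)
      (fun x hx => by rw [c0 x (by rwa [uIcc_of_le hb.le] at hx), div_pow])]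
    rw [intervalIntegral.integral_div, stmt13_int_sq a b ha0 hab']
  have E1 : ∫ ω, (F (Z ω) - F (Z ω - α)) ∂μ = (a * b - a ^ 2 / 2) / b ^ 2 := by
    have e1 : (fun ω => F (Z ω) - F (Z ω - α)) = fun ω => H (X₁ ω, X₂ ω) := by
      funext ω; simp only [hH, hZ]
    rw [e1, I1, j1, j0]
    field_simp
    ring
  have E2 : ∫ ω, (F (Z ω) - F (Z ω - α)) ^ 2 ∂μ = (a ^ 2 * b - 2 * a ^ 3 / 3) / b ^ 3 := by
    have e2 : (fun ω => (F (Z ω) - F (Z ω - α)) ^ 2) = fun ω => (fun q => (H q) ^ 2) (X₁ ω, X₂ ω) := by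
      funext ω; simp only [hH, hZ]
    rw [e2, I2]
    rw [j1s, j0s]
    field_simp
    ring
  rw [variance_eq_sub hmem]
  simp only [Pi.pow_apply]
  rw [E2, E1]
  split_ifs with h
  · rw [show a = α from min_eq_left h]
    field_simp
    ring
  · rw [show a = b from min_eq_right (le_of_not_ge h)]
    field_simp
    ring
end
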